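/- There exists a constant C > 0 such that for all real numbers η > 0, P ≥ 1 and μ ∈ ℝ, |∫ from (1/2)η^{1/3}P to 2η^{1/3}P of e(μy³) dy| ≤ C · (ηP³)^{1/3} / (1 + ηP³·|μ|). -/

import Mathlib

open Real

/-- `e t = exp(2πit)`. -/
noncomputable def e2pi (t : ℝ) : ℂ := Complex.exp (2 * Real.pi * Complex.I * t)

open intervalIntegral
lemma norm_e2pi (t : ℝ) : ‖e2pi t‖ = 1 := by
  simp [e2pi, Complex.norm_exp]

lemma hasDerivAt_e2pi (μ y : ℝ) : HasDerivAt (fun y:ℝ => e2pi (μ*y^3))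
    (e2pi (μ*y^3) * ((2*Real.pi*Complex.I*μ)*(3*(y:ℂ)^2))) y := by
  have h3 : HasDerivAt (fun y:ℝ => ((y:ℂ))^3) (3*(y:ℂ)^2) y := by
    simpa using (hasDerivAt_pow 3 (y:ℂ)).comp_ofReal
  have h := (h3.const_mul (2*Real.pi*Complex.I*μ)).cexp
  have hfun : (fun y:ℝ => Complex.exp (2*Real.pi*Complex.I*μ*(y:ℂ)^3)) = fun y:ℝ => e2pi (μ*y^3) := by
    funext z; simp only [e2pi]; push_cast; ring_nf
  rw [hfun] at h
  convert h using 1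
  simp only [e2pi]; push_cast; ring_nf

lemma key (μ a : ℝ) (ha : 0 < a) (hμ : μ ≠ 0) :
    ‖∫ y in a..(4*a), e2pi (μ*y^3)‖ ≤ 1/(|μ| * a^2) := by
  have hab : a ≤ 4*a := by linarith
  have hIcc : Set.uIcc a (4*a) = Set.Icc a (4*a) := Set.uIcc_of_le hab
  set c : ℂ := 2*Real.pi*Complex.I*μ with hc
  have hc3 : c*3 ≠ 0 := by
    simp [hc, Real.pi_ne_zero, hμ, Complex.I_ne_zero]
  set k : ℂ := (c*3)⁻¹ with hk
  set u : ℝ → ℂ := fun y => k * (((y:ℂ))^2)⁻¹ with hu_def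
  set u' : ℝ → ℂ := fun y => k * (-2) * (((y:ℂ))^3)⁻¹ with hu'_def
  set v : ℝ → ℂ := fun y => e2pi (μ*y^3) with hv_def
  set v' : ℝ → ℂ := fun y => e2pi (μ*y^3) * (c*(3*(y:ℂ)^2)) with hv'_def
  have hne : ∀ x ∈ Set.Icc a (4*a), ((x:ℂ)) ≠ 0 := by
    intro x hx
    have : (0:ℝ) < x := lt_of_lt_of_le ha hx.1
    exact_mod_cast this.ne'
  have hu : ∀ x ∈ Set.uIcc a (4*a), HasDerivAt u (u' x) x := by
    rw [hIcc]
    intro x hx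
    have hx0 : ((x:ℂ)) ≠ 0 := hne x hx
    have hz : HasDerivAt (fun z:ℂ => z^(-2:ℤ)) (((-2:ℤ)) * (x:ℂ)^((-2:ℤ)-1)) (x:ℂ) :=
      hasDerivAt_zpow (-2) _ (Or.inl hx0)
    have h2k := (hz.comp_ofReal).const_mul k
    have hfun : (fun y:ℝ => k * ((y:ℂ))^(-2:ℤ)) = u := by
      funext y
      simp [hu_def, zpow_neg]
    rw [hfun] at h2k
    refine h2k.congr_deriv (Eq.symm ?_)
    show k * (-2) * (((x:ℂ))^3)⁻¹ = k * (((-2:ℤ)) * (x:ℂ)^((-2:ℤ)-1))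
    have hz3 : ((x:ℂ))^((-2:ℤ)-1) = (((x:ℂ))^3)⁻¹ := by
      rw [show ((-2:ℤ)-1) = -(3:ℤ) by norm_num, zpow_neg]
      norm_num
      try rfl
    rw [hz3]
    push_cast
    ring
  have hv : ∀ x ∈ Set.uIcc a (4*a), HasDerivAt v (v' x) x := fun x _ => hasDerivAt_e2pi μ x
  have hcv : Continuous v := by
    simp only [hv_def, e2pi]
    fun_prop
  have hv'int : IntervalIntegrable v' MeasureTheory.volume a (4*a) := by
    apply Continuous.intervalIntegrable
    apply hcv.mul
    fun_prop
  have hu'int : IntervalIntegrable u' MeasureTheory.volume a (4*a) := by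
    apply ContinuousOn.intervalIntegrable
    rw [hIcc]
    apply ContinuousOn.mul continuousOn_const
    exact ContinuousOn.inv₀ (by fun_prop) (fun x hx => pow_ne_zero 3 (hne x hx))
  have ibp := integral_mul_deriv_eq_deriv_mul hu hv hu'int hv'int
  have heq : ∫ y in a..(4*a), e2pi (μ*y^3) = ∫ y in a..(4*a), u y * v' y := by
    apply integral_congr
    intro x hx
    rw [hIcc] at hx
    have hx0 : ((x:ℂ)) ≠ 0 := hne x hx
    have hx2 : ((x:ℂ)^2) ≠ 0 := pow_ne_zero 2 hx0
    simp only [hu_def, hv'_def, hk]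
    calc e2pi (μ*x^3)
        = e2pi (μ*x^3) * ((c*3) * (c*3)⁻¹) * ((x:ℂ)^2 * ((x:ℂ)^2)⁻¹) := by
          rw [mul_inv_cancel₀ hx2, mul_inv_cancel₀ hc3]; ring
      _ = (c*3)⁻¹ * ((x:ℂ)^2)⁻¹ * (e2pi (μ*x^3) * (c*(3*(x:ℂ)^2))) := by ring
  rw [heq, ibp]
  have hnormk : ‖k‖ = (6*Real.pi*|μ|)⁻¹ := by
    simp [hk, hc, norm_mul, Complex.norm_real, abs_of_pos Real.pi_pos]
    ring
  have hnu : ∀ x : ℝ, 0 < x → ‖u x‖ = ‖k‖ * (x^2)⁻¹ := by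
    intro x hx
    simp [hu_def, norm_mul, norm_inv, norm_pow, Complex.norm_real, abs_of_pos hx]
  have hnv : ∀ x : ℝ, ‖v x‖ = 1 := fun x => norm_e2pi _
  have ha4 : (0:ℝ) < 4*a := by linarith
  have hbound1 : ‖u (4*a) * v (4*a)‖ ≤ ‖k‖ / a^2 := by
    rw [norm_mul, hnv, mul_one, hnu _ ha4]
    rw [div_eq_mul_inv]
    gcongr
  have hbound2 : ‖u a * v a‖ ≤ ‖k‖ / a^2 := by
    rw [norm_mul, hnv, mul_one, hnu _ ha]
    rw [div_eq_mul_inv]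
  have hbound3 : ‖∫ y in a..(4*a), u' y * v y‖ ≤ (2*‖k‖/a^3) * |4*a - a| := by
    apply norm_integral_le_of_norm_le_const
    intro x hx
    rw [Set.uIoc_of_le hab] at hx
    have hxa : a < x := hx.1
    have hx0 : (0:ℝ) < x := lt_trans ha hxa
    rw [norm_mul, hnv, mul_one]
    have : ‖u' x‖ = ‖k‖ * 2 * (x^3)⁻¹ := by
      simp [hu'_def, norm_mul, norm_inv, norm_pow, Complex.norm_real, abs_of_pos hx0]
    rw [this]
    rw [div_eq_mul_inv, mul_comm (2:ℝ) ‖k‖]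
    gcongr
  have habs : |4*a - a| = 3*a := by rw [abs_of_nonneg (by linarith)]; ring
  calc ‖u (4*a) * v (4*a) - u a * v a - ∫ y in a..(4*a), u' y * v y‖
      ≤ ‖u (4*a) * v (4*a) - u a * v a‖ + ‖∫ y in a..(4*a), u' y * v y‖ := norm_sub_le _ _
    _ ≤ (‖u (4*a) * v (4*a)‖ + ‖u a * v a‖) + ‖∫ y in a..(4*a), u' y * v y‖ := by
        gcongr; exact norm_sub_le _ _
    _ ≤ (‖k‖/a^2 + ‖k‖/a^2) + (2*‖k‖/a^3) * (3*a) := by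
        rw [← habs]; gcongr
    _ = 8 * ‖k‖ / a^2 := by field_simp; ring
    _ ≤ 1/(|μ| * a^2) := by
        rw [hnormk, div_le_div_iff₀ (by positivity) (by positivity)]
        have hμ' : (0:ℝ) < |μ| := abs_pos.mpr hμ
        have hrw : 8 * (6*Real.pi*|μ|)⁻¹ * (|μ| * a^2) = 8 * (6*Real.pi)⁻¹ * a^2 := by
          field_simp
        rw [hrw]
        have hπ8 : (8:ℝ) ≤ 6*Real.pi := by nlinarith [Real.pi_gt_three]
        have hiv : (6*Real.pi)⁻¹ ≤ (8:ℝ)⁻¹ := by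
          apply inv_anti₀ (by norm_num) hπ8
        nlinarith [hiv, pow_pos ha 2]

/-- Oscillatory integral bound for `∫ e(μ y³) dy` over `[(1/2)η^{1/3}P, 2η^{1/3}P]`. -/
theorem oscillatory_integral_bound :
    ∃ C : ℝ, 0 < C ∧
      ∀ (η P μ : ℝ), 0 < η → 1 ≤ P →
        ‖∫ y in (1 / 2 * η ^ ((1 : ℝ) / 3) * P)..(2 * η ^ ((1 : ℝ) / 3) * P),
            e2pi (μ * y ^ 3)‖
          ≤ C * (η * P ^ 3) ^ ((1 : ℝ) / 3) / (1 + η * P ^ 3 * |μ|) := by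
  refine ⟨8, by norm_num, ?_⟩
  intro η P μ hη hP
  set X : ℝ := η ^ ((1:ℝ)/3) * P with hX
  have hη3 : (0:ℝ) < η ^ ((1:ℝ)/3) := Real.rpow_pos_of_pos hη _
  have hP0 : (0:ℝ) < P := lt_of_lt_of_le one_pos hP
  have hX0 : 0 < X := mul_pos hη3 hP0
  have hXcube : X^3 = η * P^3 := by
    rw [hX, mul_pow, ← Real.rpow_natCast (η ^ ((1:ℝ)/3)) 3, ← Real.rpow_mul hη.le]
    norm_num
  have hXr : (η * P^3) ^ ((1:ℝ)/3) = X := by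
    rw [← hXcube, ← Real.rpow_natCast X 3, ← Real.rpow_mul hX0.le]
    norm_num
  rw [hXr, ← hXcube]
  set a : ℝ := 1/2 * η ^ ((1:ℝ)/3) * P with hadef
  have ha : 0 < a := by rw [hadef]; positivity
  have haX : a = X/2 := by rw [hadef, hX]; ring
  have hends : 2 * η ^ ((1:ℝ)/3) * P = 4*a := by rw [hadef]; ring
  rw [hends]
  have hab : a ≤ 4*a := by linarith
  by_cases hμ : μ = 0
  · subst hμ
    have h1 : ∀ y : ℝ, e2pi ((0:ℝ)*y^3) = 1 := by intro y; simp [e2pi]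
    simp only [h1]
    rw [intervalIntegral.integral_const]
    simp only [abs_zero, mul_zero, add_zero]
    rw [norm_smul, norm_one, mul_one, Real.norm_eq_abs, abs_of_nonneg (by linarith)]
    rw [haX]
    linarith
  · have habs0 : 0 < |μ| := abs_pos.mpr hμ
    by_cases hcase : X^3 * |μ| ≤ 1
    · have h1 : ‖∫ y in a..(4*a), e2pi (μ*y^3)‖ ≤ 1 * |4*a - a| :=
        intervalIntegral.norm_integral_le_of_norm_le_const
          (fun x _ => (norm_e2pi _).le)
      have habs : |4*a - a| = 3*a := by rw [abs_of_nonneg (by linarith)]; ring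
      rw [habs, one_mul] at h1
      have hd : 0 < 1 + X^3 * |μ| := by positivity
      calc ‖∫ y in a..(4*a), e2pi (μ*y^3)‖ ≤ 3*a := h1
        _ ≤ 8 * X / (1 + X^3 * |μ|) := by
            rw [le_div_iff₀ hd, haX]
            nlinarith
    · push_neg at hcase
      have h2 := key μ a ha hμ
      have hd : 0 < 1 + X^3 * |μ| := by positivity
      calc ‖∫ y in a..(4*a), e2pi (μ*y^3)‖ ≤ 1/(|μ| * a^2) := h2
        _ ≤ 8 * X / (1 + X^3 * |μ|) := by
            rw [div_le_div_iff₀ (by positivity) hd, haX]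
            nlinarith [mul_pos (pow_pos hX0 3) habs0]
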